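/- Let ν > 0, ε > 0 and T ∈ ℝ, and define m : ℝ → ℝ by m(t) = ν·(1 + (ν·ε − 1)·e^{−ν(T−t)})^{−1}. Then for every t ≤ T the denominator 1 + (νε − 1)e^{−ν(T−t)} is strictly positive, m(T) = 1/ε, and m has derivative at every t ≤ T satisfying the Riccati equation m'(t) = m(t)² − ν·m(t) = m(t)·(m(t) − ν). -/

import Mathlib

lemma denom_pos (ν ε T : ℝ) (hν : 0 < ν) (hε : 0 < ε) (t : ℝ) (ht : t ≤ T) :
    0 < 1 + (ν * ε - 1) * Real.exp (-ν * (T - t)) := by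
  have hE : 0 < Real.exp (-ν * (T - t)) := Real.exp_pos _
  have hE1 : Real.exp (-ν * (T - t)) ≤ 1 := by
    apply Real.exp_le_one_iff.mpr
    nlinarith
  have hνε : 0 < ν * ε := mul_pos hν hε
  rcases le_or_gt 0 (ν * ε - 1) with h | h
  · positivity
  · nlinarith

/-- The finite-horizon Merton consumption fraction
`m(t) = ν·(1 + (νε − 1)e^{−ν(T−t)})⁻¹` has a strictly positive denominator for
`t ≤ T`, satisfies the terminal condition `m(T) = 1/ε`, and solves the Riccati
equation `m'(t) = m(t)² − ν·m(t) = m(t)(m(t) − ν)` for every `t ≤ T`. -/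
theorem stmt7 (ν ε T : ℝ) (hν : 0 < ν) (hε : 0 < ε) :
    let m : ℝ → ℝ := fun t => ν / (1 + (ν * ε - 1) * Real.exp (-ν * (T - t)))
    (∀ t ≤ T, 0 < 1 + (ν * ε - 1) * Real.exp (-ν * (T - t))) ∧
    m T = 1 / ε ∧
    (∀ t ≤ T, HasDerivAt m (m t ^ 2 - ν * m t) t) := by
  intro m
  refine ⟨fun t ht => denom_pos ν ε T hν hε t ht, ?_, ?_⟩
  · show ν / (1 + (ν * ε - 1) * Real.exp (-ν * (T - T))) = 1 / ε
    rw [sub_self, mul_zero, Real.exp_zero, mul_one]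
    field_simp
    ring
  · intro t ht
    have hD := denom_pos ν ε T hν hε t ht
    set D : ℝ → ℝ := fun s => 1 + (ν * ε - 1) * Real.exp (-ν * (T - s)) with hDdef
    have hDd : HasDerivAt D ((ν * ε - 1) * Real.exp (-ν * (T - t)) * ν) t := by
      have h1 : HasDerivAt (fun s : ℝ => -ν * (T - s)) ν t := by
        simpa using ((hasDerivAt_id t).const_sub T).const_mul (-ν)
      have h2 := (h1.exp).const_mul (ν * ε - 1)
      simpa [hDdef, mul_comm, mul_assoc, mul_left_comm] using h2.const_add 1
    have hm : HasDerivAt m (-(ν * ((ν * ε - 1) * Real.exp (-ν * (T - t)) * ν)) / (D t) ^ 2) t := by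
      exact ((hasDerivAt_const t ν).div hDd (ne_of_gt hD)).congr_deriv (by ring)
    convert hm using 1
    have hDt : D t = 1 + (ν * ε - 1) * Real.exp (-ν * (T - t)) := rfl
    have hne : D t ≠ 0 := ne_of_gt hD
    show (ν / D t) ^ 2 - ν * (ν / D t) = _
    field_simp
    ring_nf
    rw [hDt]
    ring_nf
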